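/- Let q ≥ 2 be an integer, let n, k, δ, j be integers with 0 ≤ k ≤ n, 0 ≤ j ≤ n, 0 ≤ δ ≤ n and 2j + δ > n − k, and let E be a fixed j-dimensional F_q-subspace of F_q^n. If V is chosen uniformly at random from the set of all δ-dimensional F_q-subspaces of F_q^n, then Pr[dim(E ∩ V) ≥ ⌈j − (n−k)/2 + δ/2⌉], which equals (Σ_{i=⌈j − (n−k)/2 + δ/2⌉}^{min{δ, j}} [n−j, δ−i]_q · [j, i]_q · q^{(j−i)(δ−i)}) / [n, δ]_q, is at most 16 n · q^{−⌈δ/2 + j − (n−k)/2⌉ · ((n+k)/2 − ⌈δ/2⌉)}. -/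

import Mathlib

/-- The Gaussian binomial coefficient `[a, b]_q`, defined as
`∏_{i=0}^{b-1} (q^{a-i} - 1)/(q^{b-i} - 1)` for `0 ≤ b ≤ a`, and `0` otherwise. -/
noncomputable def gaussBinom (q : ℚ) (a b : ℤ) : ℚ :=
  if 0 ≤ b ∧ b ≤ a then
    ∏ i ∈ Finset.range b.toNat, (q ^ (a - i).toNat - 1) / (q ^ (b - i).toNat - 1)
  else 0

open Finset Module Submodule

set_option linter.unusedSectionVars false
set_option linter.unusedVariables false



lemma natCard_sigma {ι : Type*} [Fintype ι] (f : ι → Type*) [∀ i, Finite (f i)] :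
    Nat.card (Σ i, f i) = ∑ i, Nat.card (f i) := by
  letI : ∀ i, Fintype (f i) := fun i => Fintype.ofFinite _
  simp [Nat.card_eq_fintype_card]





lemma gaussBinom_nat (q : ℕ) (m d : ℕ) (hd : d ≤ m) :
    gaussBinom q m d = ∏ i ∈ Finset.range d, ((q:ℚ) ^ (m - i) - 1) / ((q:ℚ) ^ (d - i) - 1) := by
  rw [gaussBinom, if_pos ⟨Int.ofNat_nonneg d, by exact_mod_cast hd⟩, Int.toNat_natCast]
  refine Finset.prod_congr rfl fun i hi => ?_
  rw [Finset.mem_range] at hi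
  have h1 : ((m:ℤ) - i).toNat = m - i := by omega
  have h2 : ((d:ℤ) - i).toNat = d - i := by omega
  rw [h1, h2]

lemma gaussBinom_of_gt (q : ℚ) {m d : ℤ} (h : m < d) : gaussBinom q m d = 0 := by
  rw [gaussBinom, if_neg]; omega

lemma gaussBinom_eq_div (q : ℕ) (hq : 2 ≤ q) (m d : ℕ) (hd : d ≤ m) :
    gaussBinom q m d = (∏ i ∈ Finset.range d, ((q:ℚ) ^ m - (q:ℚ) ^ i))
      / ∏ i ∈ Finset.range d, ((q:ℚ) ^ d - (q:ℚ) ^ i) := by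
  rw [gaussBinom_nat q m d hd, ← Finset.prod_div_distrib]
  refine Finset.prod_congr rfl fun i hi => ?_
  rw [Finset.mem_range] at hi
  have hqpos : (0:ℚ) < (q:ℚ)^i := by positivity
  have h1 : (q:ℚ) ^ m - (q:ℚ) ^ i = (q:ℚ)^i * ((q:ℚ) ^ (m - i) - 1) := by
    rw [mul_sub, mul_one, ← pow_add]
    congr 2
    omega
  have h2 : (q:ℚ) ^ d - (q:ℚ) ^ i = (q:ℚ)^i * ((q:ℚ) ^ (d - i) - 1) := by
    rw [mul_sub, mul_one, ← pow_add]
    congr 2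
    omega
  rw [h1, h2, mul_div_mul_left _ _ (ne_of_gt hqpos)]

lemma gaussBinom_pos (q : ℕ) (hq : 2 ≤ q) (m d : ℕ) (hd : d ≤ m) :
    0 < gaussBinom q m d := by
  rw [gaussBinom_nat q m d hd]
  refine Finset.prod_pos fun i hi => ?_
  rw [Finset.mem_range] at hi
  have h1 : (1:ℚ) < (q:ℚ) ^ (m - i) := by
    apply one_lt_pow₀
    · exact_mod_cast hq
    · omega
  have h2 : (1:ℚ) < (q:ℚ) ^ (d - i) := by
    apply one_lt_pow₀
    · exact_mod_cast hq
    · omega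
  exact div_pos (by linarith) (by linarith)

lemma gaussBinom_nonneg (q : ℕ) (hq : 2 ≤ q) (m d : ℤ) : 0 ≤ gaussBinom q m d := by
  rw [gaussBinom]
  split
  · rename_i h
    obtain ⟨h0, hdm⟩ := h
    refine Finset.prod_nonneg fun i hi => ?_
    rw [Finset.mem_range] at hi
    have hi' : (i : ℤ) < d := by omega
    have h1 : (1:ℚ) ≤ (q:ℚ) ^ (m - i).toNat := one_le_pow₀ (by exact_mod_cast hq.trans' one_le_two)
    have h2 : (1:ℚ) < (q:ℚ) ^ (d - i).toNat := by
      apply one_lt_pow₀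
      · exact_mod_cast hq
      · omega
    exact div_nonneg (by linarith) (by linarith)
  · exact le_refl 0




private lemma step_ineq (u v : ℚ) (hu0 : 0 < u) (hu : u ≤ 1/2) (hv0 : 0 ≤ v) (hv : v ≤ u/2) :
    1/4 + v/2 ≤ (1/4 + u/2)*(1 - v) := by
  nlinarith [mul_le_mul_of_nonneg_left hv hu0.le, mul_le_mul_of_nonneg_right hu hu0.le]

lemma prod_one_sub_ge (q : ℕ) (hq : 2 ≤ q) (d : ℕ) :
    (1:ℚ)/4 ≤ ∏ l ∈ Finset.range d, (1 - 1/(q:ℚ)^(l+1)) := by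
  have hq1 : (2:ℚ) ≤ (q:ℚ) := by exact_mod_cast hq
  have hqpow : ∀ e : ℕ, 1 ≤ e → (2:ℚ) ≤ (q:ℚ)^e := by
    intro e he
    calc (2:ℚ) ≤ (q:ℚ) := hq1
      _ = (q:ℚ)^1 := (pow_one _).symm
      _ ≤ (q:ℚ)^e := pow_le_pow_right₀ (by linarith) he
  have key : ∀ d : ℕ, (1:ℚ)/4 + (1/2) * (1/(q:ℚ)^(d+1))
      ≤ ∏ l ∈ Finset.range (d+1), (1 - 1/(q:ℚ)^(l+1)) := by
    intro d
    induction d with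
    | zero =>
      rw [Finset.prod_range_one]
      have h2 : (1:ℚ)/(q:ℚ)^1 ≤ 1/2 := by
        rw [div_le_div_iff₀ (by positivity) (by norm_num)]
        linarith [hqpow 1 le_rfl]
      nlinarith [h2]
    | succ d ih =>
      rw [Finset.prod_range_succ]
      set u := (1:ℚ)/(q:ℚ)^(d+1) with hudef
      set v := (1:ℚ)/(q:ℚ)^(d+2) with hvdef
      have hu0 : 0 < u := by positivity
      have hu : u ≤ 1/2 := by
        rw [hudef, div_le_div_iff₀ (by positivity) (by norm_num)]
        linarith [hqpow (d+1) (by omega)]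
      have hv0 : (0:ℚ) ≤ v := by positivity
      have hv : v ≤ u/2 := by
        rw [hvdef, hudef, div_div, div_le_div_iff₀ (by positivity) (by positivity)]
        have : (q:ℚ)^(d+2) = (q:ℚ)^(d+1) * (q:ℚ) := by ring
        rw [this]
        nlinarith [pow_pos (show (0:ℚ) < q by linarith) (d+1)]
      calc (1:ℚ)/4 + (1/2) * v ≤ ((1:ℚ)/4 + (1/2) * u) * (1 - v) := by
            have := step_ineq u v hu0 hu hv0 hv
            linarith [this]
        _ ≤ (∏ l ∈ Finset.range (d+1), (1 - 1/(q:ℚ)^(l+1))) * (1 - v) := by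
            apply mul_le_mul_of_nonneg_right (by linarith [ih]) (by nlinarith [hv0, hv, hu])
  cases d with
  | zero => norm_num
  | succ d =>
    have := key d
    have hp : (0:ℚ) < 1/(q:ℚ)^(d+1) := by positivity
    linarith

lemma gaussBinom_le (q : ℕ) (hq : 2 ≤ q) (m d : ℕ) (hd : d ≤ m) :
    gaussBinom q m d ≤ 4 * (q:ℚ) ^ (d * (m - d)) := by
  have hq1 : (2:ℚ) ≤ (q:ℚ) := by exact_mod_cast hq
  have hq0 : (0:ℚ) < q := by linarith
  rw [gaussBinom_nat q m d hd]
  have hfac : ∀ i ∈ Finset.range d,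
      ((q:ℚ) ^ (m - i) - 1) / ((q:ℚ) ^ (d - i) - 1)
        ≤ (q:ℚ)^(m-d) * (1 - 1/(q:ℚ)^(d-i))⁻¹ := by
    intro i hi
    rw [Finset.mem_range] at hi
    have h1 : (1:ℚ) < (q:ℚ)^(d-i) := by
      apply one_lt_pow₀ (by linarith) (by omega)
    have hden : (0:ℚ) < (q:ℚ)^(d-i) - 1 := by linarith
    have heq : (q:ℚ)^(m-d) * (1 - 1/(q:ℚ)^(d-i))⁻¹ = (q:ℚ)^(m-i) / ((q:ℚ)^(d-i) - 1) := by
      rw [one_sub_div (by positivity), inv_div, ← mul_div_assoc, ← pow_add]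
      congr 2
      omega
    rw [heq]
    gcongr
    linarith
  have hP0 : (0:ℚ) < ∏ i ∈ Finset.range d, (1 - 1/(q:ℚ)^(d-i)) := by
    apply Finset.prod_pos
    intro i hi
    rw [Finset.mem_range] at hi
    have h1 : (1:ℚ) < (q:ℚ)^(d-i) := one_lt_pow₀ (by linarith) (by omega)
    have h2 : (1:ℚ)/(q:ℚ)^(d-i) < 1 := by
      rw [div_lt_one (by positivity)]; exact h1
    linarith
  have hre : ∏ i ∈ Finset.range d, (1 - 1/(q:ℚ)^(d-i))
      = ∏ l ∈ Finset.range d, (1 - 1/(q:ℚ)^(l+1)) := by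
    rw [← Finset.prod_range_reflect (fun l => (1 - 1/(q:ℚ)^(l+1))) d]
    apply Finset.prod_congr rfl
    intro i hi
    rw [Finset.mem_range] at hi
    have : d - 1 - i + 1 = d - i := by omega
    simp only [this]
  have hP : (1:ℚ)/4 ≤ ∏ i ∈ Finset.range d, (1 - 1/(q:ℚ)^(d-i)) := by
    rw [hre]; exact prod_one_sub_ge q hq d
  have hPinv : (∏ i ∈ Finset.range d, (1 - 1/(q:ℚ)^(d-i)))⁻¹ ≤ 4 := by
    rw [inv_le_comm₀ hP0 (by norm_num)]
    linarith
  calc ∏ i ∈ Finset.range d, ((q:ℚ) ^ (m - i) - 1) / ((q:ℚ) ^ (d - i) - 1)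
      ≤ ∏ i ∈ Finset.range d, ((q:ℚ)^(m-d) * (1 - 1/(q:ℚ)^(d-i))⁻¹) := by
        apply Finset.prod_le_prod _ hfac
        intro i hi
        rw [Finset.mem_range] at hi
        have h1 : (1:ℚ) < (q:ℚ)^(m-i) := one_lt_pow₀ (by linarith) (by omega)
        have h2 : (1:ℚ) < (q:ℚ)^(d-i) := one_lt_pow₀ (by linarith) (by omega)
        exact div_nonneg (by linarith) (by linarith)
    _ = (q:ℚ)^(d*(m-d)) * (∏ i ∈ Finset.range d, (1 - 1/(q:ℚ)^(d-i)))⁻¹ := by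
        rw [Finset.prod_mul_distrib, Finset.prod_const, Finset.card_range, ← pow_mul,
          ← Finset.prod_inv_distrib, mul_comm (m-d) d]
    _ ≤ (q:ℚ)^(d*(m-d)) * 4 := by
        apply mul_le_mul_of_nonneg_left hPinv (by positivity)
    _ = 4 * (q:ℚ) ^ (d * (m - d)) := by ring

lemma gaussBinom_ge (q : ℕ) (hq : 2 ≤ q) (m d : ℕ) (hd : d ≤ m) :
    (q:ℚ) ^ (d * (m - d)) ≤ gaussBinom q m d := by
  have hq1 : (2:ℚ) ≤ (q:ℚ) := by exact_mod_cast hq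
  rw [gaussBinom_nat q m d hd]
  have : (q:ℚ) ^ (d * (m - d)) = ∏ _i ∈ Finset.range d, (q:ℚ)^(m-d) := by
    rw [Finset.prod_const, Finset.card_range, ← pow_mul, mul_comm]
  rw [this]
  apply Finset.prod_le_prod
  · intro i hi; positivity
  · intro i hi
    rw [Finset.mem_range] at hi
    have h2 : (1:ℚ) < (q:ℚ)^(d-i) := one_lt_pow₀ (by linarith) (by omega)
    rw [le_div_iff₀ (by linarith)]
    have hpow : (q:ℚ)^(m-d) * (q:ℚ)^(d-i) = (q:ℚ)^(m-i) := by
      rw [← pow_add]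
      congr 1
      omega
    have h3 : (1:ℚ) ≤ (q:ℚ)^(m-d) := one_le_pow₀ (by linarith)
    nlinarith [h2, h3, hpow]


section CountingLemmas
variable {F : Type} [Field F] [Fintype F]
variable {X : Type} [AddCommGroup X] [Module F X] [Fintype X]


lemma card_li (d : ℕ) :
    Nat.card {f : Fin d → X // LinearIndependent F f}
      = ∏ i ∈ Finset.range d, (Fintype.card X - Fintype.card F ^ i) := by
  induction d with
  | zero =>
    rw [Finset.prod_range_zero]
    have h : ∀ f : Fin 0 → X, LinearIndependent F f := fun f => linearIndependent_empty_type
    rw [Nat.card_congr (Equiv.subtypeUnivEquiv h)]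
    simp [Nat.card_eq_fintype_card]
  | succ d ih =>
    have e : {f : Fin (d+1) → X // LinearIndependent F f}
        ≃ Σ g : {g : Fin d → X // LinearIndependent F g},
            {x : X // x ∉ span F (Set.range (g : Fin d → X))} :=
      { toFun := fun f => ⟨⟨Fin.tail f.1, (linearIndependent_fin_succ.1 f.2).1⟩,
          ⟨f.1 0, (linearIndependent_fin_succ.1 f.2).2⟩⟩
        invFun := fun p => ⟨Fin.cons p.2.1 p.1.1,
          linearIndependent_fin_cons.2 ⟨p.1.2, p.2.2⟩⟩
        left_inv := fun f => by
          ext : 1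
          exact Fin.cons_self_tail f.1
        right_inv := fun p => by
          refine Sigma.ext ?_ ?_
          · ext x
            simp [Fin.tail_cons]
          · rw [Subtype.heq_iff_coe_eq]
            · simp
            · intro x
              simp [Fin.tail_cons] }
    haveI : Fintype {g : Fin d → X // LinearIndependent F g} := Fintype.ofFinite _
    have hfib : ∀ g : {g : Fin d → X // LinearIndependent F g},
        Nat.card {x : X // x ∉ span F (Set.range (g : Fin d → X))}
          = Fintype.card X - Fintype.card F ^ d := by
      intro g
      classical
      rw [Nat.card_eq_fintype_card, Fintype.card_subtype_compl]
      congr 1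
      have h2 : Fintype.card {x : X // x ∈ span F (Set.range (g : Fin d → X))}
          = Fintype.card (span F (Set.range (g : Fin d → X))) := by
        apply Fintype.card_congr; rfl
      rw [h2, card_eq_pow_finrank (K := F), finrank_span_eq_card g.2, Fintype.card_fin]
    calc Nat.card {f : Fin (d+1) → X // LinearIndependent F f}
        = ∑ g : {g : Fin d → X // LinearIndependent F g},
            Nat.card {x : X // x ∉ span F (Set.range (g : Fin d → X))} := by
          rw [Nat.card_congr e, natCard_sigma]
      _ = ∑ _g : {g : Fin d → X // LinearIndependent F g},
            (Fintype.card X - Fintype.card F ^ d) := Finset.sum_congr rfl fun g _ => hfib g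
      _ = Nat.card {g : Fin d → X // LinearIndependent F g}
            * (Fintype.card X - Fintype.card F ^ d) := by
          rw [Finset.sum_const, Finset.card_univ, Nat.card_eq_fintype_card, smul_eq_mul]
      _ = _ := by rw [ih, Finset.prod_range_succ]


lemma card_grass_mul (d : ℕ) :
    Nat.card {W : Submodule F X // finrank F W = d}
        * ∏ i ∈ Finset.range d, (Fintype.card F ^ d - Fintype.card F ^ i)
      = ∏ i ∈ Finset.range d, (Fintype.card X - Fintype.card F ^ i) := by
  classical
  haveI : Fintype {W : Submodule F X // finrank F W = d} := Fintype.ofFinite _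
  -- the "span" map
  let φ : {f : Fin d → X // LinearIndependent F f} → {W : Submodule F X // finrank F W = d} :=
    fun f => ⟨span F (Set.range f.1), by
      rw [finrank_span_eq_card f.2, Fintype.card_fin]⟩
  have hfib : ∀ W : {W : Submodule F X // finrank F W = d},
      Nat.card {f : {f : Fin d → X // LinearIndependent F f} // φ f = W}
        = ∏ i ∈ Finset.range d, (Fintype.card F ^ d - Fintype.card F ^ i) := by
    intro W
    have e : {f : {f : Fin d → X // LinearIndependent F f} // φ f = W}
        ≃ {g : Fin d → W.1 // LinearIndependent F g} :=
      { toFun := fun f => ⟨fun i => ⟨f.1.1 i, by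
          have : span F (Set.range f.1.1) = W.1 := congrArg Subtype.val f.2
          rw [← this]; exact subset_span ⟨i, rfl⟩⟩, by
          apply LinearIndependent.of_comp W.1.subtype
          convert f.1.2 using 1
          rfl⟩
        invFun := fun g => ⟨⟨fun i => (g.1 i : X), g.2.map' W.1.subtype (ker_subtype W.1)⟩, by
          apply Subtype.ext
          show span F (Set.range fun i => (g.1 i : X)) = W.1
          have hrange : (Set.range fun i => (g.1 i : X)) = W.1.subtype '' Set.range g.1 := by
            ext x; simp
          have htop : span F (Set.range g.1) = ⊤ := Submodule.eq_top_of_finrank_eq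
            (by rw [finrank_span_eq_card g.2, Fintype.card_fin, W.2])
          rw [hrange, ← Submodule.map_span (W.1).subtype, htop, Submodule.map_top, range_subtype]⟩
        left_inv := fun f => by ext i; rfl
        right_inv := fun g => by ext i; rfl }
    rw [Nat.card_congr e, card_li d, card_eq_pow_finrank (K := F) (V := W.1), W.2]
  calc Nat.card {W : Submodule F X // finrank F W = d}
        * ∏ i ∈ Finset.range d, (Fintype.card F ^ d - Fintype.card F ^ i)
      = ∑ W : {W : Submodule F X // finrank F W = d},
          Nat.card {f : {f : Fin d → X // LinearIndependent F f} // φ f = W} := by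
        rw [Finset.sum_congr rfl fun W _ => hfib W, Finset.sum_const, Finset.card_univ,
          Nat.card_eq_fintype_card, smul_eq_mul]
    _ = Nat.card {f : Fin d → X // LinearIndependent F f} := by
        rw [← natCard_sigma, Nat.card_congr (Equiv.sigmaFiberEquiv φ)]
    _ = _ := card_li d


lemma card_grass (d : ℕ) :
    (Nat.card {W : Submodule F X // finrank F W = d} : ℚ)
      = gaussBinom (Fintype.card F) (finrank F X) d := by
  set q := Fintype.card F with hqdef
  have hq : 2 ≤ q := Fintype.one_lt_card
  set m := finrank F X with hmdef
  by_cases hd : d ≤ m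
  · have hcardX : Fintype.card X = q ^ m := card_eq_pow_finrank (K := F)
    have key := card_grass_mul (F := F) (X := X) d
    have hc1 : ∀ i ∈ Finset.range d, ((q ^ d - q ^ i : ℕ) : ℚ) = (q:ℚ)^d - (q:ℚ)^i := by
      intro i hi; rw [Finset.mem_range] at hi
      have h : q ^ i ≤ q ^ d := Nat.pow_le_pow_right (by omega) (by omega)
      push_cast [Nat.cast_sub h]; ring
    have hc2 : ∀ i ∈ Finset.range d, ((Fintype.card X - q ^ i : ℕ) : ℚ)
        = (q:ℚ)^m - (q:ℚ)^i := by
      intro i hi; rw [Finset.mem_range] at hi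
      have h : q ^ i ≤ q ^ m := Nat.pow_le_pow_right (by omega) (by omega)
      rw [hcardX, Nat.cast_sub h]; push_cast; ring
    have hkey : (Nat.card {W : Submodule F X // finrank F W = d} : ℚ)
        * ∏ i ∈ Finset.range d, ((q:ℚ) ^ d - (q:ℚ) ^ i)
        = ∏ i ∈ Finset.range d, ((q:ℚ) ^ m - (q:ℚ) ^ i) := by
      have h0 : ((Nat.card {W : Submodule F X // finrank F W = d}
          * ∏ i ∈ Finset.range d, (q ^ d - q ^ i) : ℕ) : ℚ)
          = ((∏ i ∈ Finset.range d, (Fintype.card X - q ^ i) : ℕ) : ℚ) := by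
        exact_mod_cast congrArg (Nat.cast (R := ℚ)) key
      rw [Nat.cast_mul, Nat.cast_prod, Nat.cast_prod, Finset.prod_congr rfl hc1,
        Finset.prod_congr rfl hc2] at h0
      exact h0
    have hpos : 0 < ∏ i ∈ Finset.range d, ((q:ℚ)^d - (q:ℚ)^i) := by
      refine Finset.prod_pos fun i hi => ?_
      rw [Finset.mem_range] at hi
      have : (q:ℚ)^i < (q:ℚ)^d := by
        apply pow_lt_pow_right₀
        · exact_mod_cast hq
        · omega
      linarith
    rw [gaussBinom_eq_div q hq m d hd, eq_div_iff (ne_of_gt hpos)]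
    exact hkey
  · have hempty : IsEmpty {W : Submodule F X // finrank F W = d} :=
      ⟨fun W => hd (W.2 ▸ Submodule.finrank_le W.1)⟩
    rw [Nat.card_of_isEmpty, gaussBinom_of_gt]
    · simp
    · exact_mod_cast Nat.lt_of_not_le hd


lemma card_isCompl (K : Submodule F X) :
    Nat.card {V : Submodule F X // IsCompl K V}
      = Fintype.card F ^ (finrank F K * (finrank F X - finrank F K)) := by
  classical
  obtain ⟨C, hC⟩ := Submodule.exists_isCompl K
  -- projections onto K restricting to id on K  ≃  linear maps C → K
  have e2 : {f : X →ₗ[F] K // ∀ x : K, f x = x} ≃ (C →ₗ[F] K) :=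
    { toFun := fun f => f.1.comp C.subtype
      invFun := fun g => ⟨(LinearMap.coprod LinearMap.id g).comp ((Submodule.prodEquivOfIsCompl K C hC).symm : X →ₗ[F] (K × C)),
        by
          intro x
          have h1 : (Submodule.prodEquivOfIsCompl K C hC).symm (x : X) = (x, 0) :=
            Submodule.prodEquivOfIsCompl_symm_apply_left K C hC x
          simp [h1]⟩
      left_inv := fun f => by
        apply Subtype.ext
        apply LinearMap.ext
        intro x
        obtain ⟨p, hp⟩ : ∃ p : K × C, (Submodule.prodEquivOfIsCompl K C hC) p = x := ⟨(Submodule.prodEquivOfIsCompl K C hC).symm x, (Submodule.prodEquivOfIsCompl K C hC).apply_symm_apply x⟩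
        have hsum : (p.1 : X) + (p.2 : X) = x := by
          rw [← hp, Submodule.coe_prodEquivOfIsCompl' K C hC]
        have hsymm : (Submodule.prodEquivOfIsCompl K C hC).symm x = p := by rw [← hp, (Submodule.prodEquivOfIsCompl K C hC).symm_apply_apply]
        simp only [LinearMap.comp_apply, LinearEquiv.coe_coe, hsymm, LinearMap.coprod_apply,
          LinearMap.id_apply]
        rw [← hsum, map_add, f.2 p.1]
        rfl
      right_inv := fun g => by
        apply LinearMap.ext
        intro c
        have h1 : (Submodule.prodEquivOfIsCompl K C hC).symm (c : X) = (0, c) :=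
          Submodule.prodEquivOfIsCompl_symm_apply_right K C hC c
        simp [h1] }
  rw [Nat.card_congr ((Submodule.isComplEquivProj K).trans e2)]
  have bC := Module.finBasis F C
  have bK := Module.finBasis F K
  rw [Nat.card_congr (LinearMap.toMatrix bC bK).toEquiv]
  rw [Nat.card_eq_fintype_card]
  have hdim : finrank F C = finrank F X - finrank F K := by
    have := Submodule.finrank_add_eq_of_isCompl hC; omega
  show Fintype.card (Fin (finrank F K) → Fin (finrank F C) → F) = _
  rw [Fintype.card_fun, Fintype.card_fun, Fintype.card_fin, Fintype.card_fin, ← pow_mul, hdim,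
    Nat.mul_comm]


lemma card_compl_rel (Y A : Submodule F X) (hA : A ≤ Y) :
    Nat.card {V : Submodule F X // V ≤ Y ∧ Disjoint A V ∧ A ⊔ V = Y}
      = Fintype.card F ^ (finrank F A * (finrank F Y - finrank F A)) := by
  classical
  set A' : Submodule F Y := comap Y.subtype A with hA'
  have hinj : Function.Injective (Y.subtype) := Submodule.injective_subtype Y
  have hmapA' : map Y.subtype A' = A := by
    rw [hA', Submodule.map_comap_subtype, inf_eq_right.2 hA]
  have e : {V : Submodule F X // V ≤ Y ∧ Disjoint A V ∧ A ⊔ V = Y}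
      ≃ {V' : Submodule F Y // IsCompl A' V'} :=
    { toFun := fun V => ⟨comap Y.subtype V.1, by
        obtain ⟨hVY, hdisj, hsup⟩ := V.2
        constructor
        · rw [disjoint_iff]
          apply Submodule.map_injective_of_injective hinj
          rw [Submodule.map_inf _ hinj, hmapA', Submodule.map_comap_subtype,
            inf_eq_right.2 hVY, Submodule.map_bot]
          exact disjoint_iff.1 hdisj
        · rw [codisjoint_iff]
          apply Submodule.map_injective_of_injective hinj
          rw [Submodule.map_sup, hmapA', Submodule.map_comap_subtype,
            inf_eq_right.2 hVY, Submodule.map_top, Submodule.range_subtype]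
          exact hsup⟩
      invFun := fun V' => ⟨map Y.subtype V'.1, by
        refine ⟨Submodule.map_subtype_le Y V'.1, ?_, ?_⟩
        · rw [disjoint_iff, ← hmapA', ← Submodule.map_inf _ hinj,
            disjoint_iff.1 V'.2.1, Submodule.map_bot]
        · rw [← hmapA', ← Submodule.map_sup, codisjoint_iff.1 V'.2.2,
            Submodule.map_top, Submodule.range_subtype]⟩
      left_inv := fun V => by
        apply Subtype.ext
        show map Y.subtype (comap Y.subtype V.1) = V.1
        rw [Submodule.map_comap_subtype, inf_eq_right.2 V.2.1]
      right_inv := fun V' => by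
        apply Subtype.ext
        show comap Y.subtype (map Y.subtype V'.1) = V'.1
        exact Submodule.comap_map_eq_of_injective hinj V'.1 }
  rw [Nat.card_congr e, card_isCompl A']
  have hfr : finrank F A' = finrank F A := by
    rw [← hmapA']
    exact (Submodule.equivMapOfInjective _ hinj A').finrank_eq
  rw [hfr]





lemma finrank_map_mkQ_add (W V : Submodule F X) :
    finrank F (map W.mkQ V) + finrank F (W ⊓ V : Submodule F X) = finrank F V := by
  have h := LinearMap.finrank_range_add_finrank_ker (W.mkQ.comp V.subtype)
  rw [LinearMap.range_comp, Submodule.range_subtype, LinearMap.ker_comp, Submodule.ker_mkQ] at h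
  have h2 : finrank F (comap V.subtype W : Submodule F V) = finrank F (W ⊓ V : Submodule F X) := by
    have := (Submodule.equivMapOfInjective _ (Submodule.injective_subtype V)
      (comap V.subtype W)).finrank_eq
    rw [Submodule.map_comap_subtype, inf_comm] at this
    exact this
  omega

lemma card_disjoint (A : Submodule F X) (d : ℕ) :
    (Nat.card {V : Submodule F X // finrank F V = d ∧ A ⊓ V = ⊥} : ℚ)
      = (Fintype.card F : ℚ) ^ (finrank F A * d)
        * gaussBinom (Fintype.card F) ((finrank F X - finrank F A : ℕ)) d := by
  classical
  haveI : Finite (X ⧸ A) := Finite.of_surjective _ (Submodule.mkQ_surjective A)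
  haveI : Fintype (X ⧸ A) := Fintype.ofFinite _
  haveI : Fintype {U : Submodule F (X ⧸ A) // finrank F U = d} := Fintype.ofFinite _
  have hmapbot : map A.mkQ A = ⊥ := by
    rw [eq_bot_iff]
    rintro x ⟨a, ha, rfl⟩
    simpa using (Submodule.Quotient.mk_eq_zero A).2 ha
  let φ : {V : Submodule F X // finrank F V = d ∧ A ⊓ V = ⊥}
      → {U : Submodule F (X ⧸ A) // finrank F U = d} := fun V => ⟨map A.mkQ V.1, by
    have h := finrank_map_mkQ_add A V.1
    rw [V.2.2, finrank_bot, V.2.1] at h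
    omega⟩
  have hfib : ∀ U : {U : Submodule F (X ⧸ A) // finrank F U = d},
      Nat.card {V // φ V = U} = Fintype.card F ^ (finrank F A * d) := by
    intro U
    set Y : Submodule F X := comap A.mkQ U.1 with hY
    have hAY : A ≤ Y := by
      intro x hx
      show A.mkQ x ∈ U.1
      have : A.mkQ x = 0 := (Submodule.Quotient.mk_eq_zero A).2 hx
      rw [this]; exact zero_mem _
    have hmapY : map A.mkQ Y = U.1 := by
      rw [hY, Submodule.map_comap_eq, Submodule.range_mkQ, top_inf_eq]
    have hYfr : finrank F Y = finrank F A + d := by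
      have h := finrank_map_mkQ_add A Y
      rw [hmapY, inf_eq_left.2 hAY, U.2] at h
      omega
    have e : {V // φ V = U} ≃ {V : Submodule F X // V ≤ Y ∧ Disjoint A V ∧ A ⊔ V = Y} :=
      { toFun := fun V => by
          refine ⟨V.1.1, ?_, ?_, ?_⟩
          · have hmap : map A.mkQ V.1.1 = U.1 := congrArg Subtype.val V.2
            rw [hY, ← hmap]
            exact Submodule.le_comap_map _ _
          · exact disjoint_iff.2 V.1.2.2
          · have hmap : map A.mkQ V.1.1 = U.1 := congrArg Subtype.val V.2
            have hle : A ⊔ V.1.1 ≤ Y := sup_le hAY (by rw [hY, ← hmap]; exact Submodule.le_comap_map _ _)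
            have hfr := Submodule.finrank_sup_add_finrank_inf_eq A V.1.1
            rw [V.1.2.2, finrank_bot, V.1.2.1] at hfr
            exact (Submodule.eq_of_le_of_finrank_le hle (by omega)).symm ▸ rfl
        invFun := fun V => by
          refine ⟨⟨V.1, ?_, disjoint_iff.1 V.2.2.1⟩, ?_⟩
          · have hfr := Submodule.finrank_sup_add_finrank_inf_eq A V.1
            rw [V.2.2.2, disjoint_iff.1 V.2.2.1, finrank_bot, hYfr] at hfr
            omega
          · apply Subtype.ext
            show map A.mkQ V.1 = U.1
            have : map A.mkQ (A ⊔ V.1) = map A.mkQ V.1 := by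
              rw [Submodule.map_sup, hmapbot, bot_sup_eq]
            rw [← this, V.2.2.2, hmapY]
        left_inv := fun V => by apply Subtype.ext; apply Subtype.ext; rfl
        right_inv := fun V => by apply Subtype.ext; rfl }
    rw [Nat.card_congr e, card_compl_rel Y A hAY, hYfr, Nat.add_sub_cancel_left]
  have htot : (Nat.card {V : Submodule F X // finrank F V = d ∧ A ⊓ V = ⊥} : ℚ)
      = (Nat.card {U : Submodule F (X ⧸ A) // finrank F U = d} : ℚ)
        * (Fintype.card F : ℚ) ^ (finrank F A * d) := by
    have h0 : Nat.card {V : Submodule F X // finrank F V = d ∧ A ⊓ V = ⊥}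
        = ∑ U : {U : Submodule F (X ⧸ A) // finrank F U = d}, Nat.card {V // φ V = U} := by
      rw [← natCard_sigma, Nat.card_congr (Equiv.sigmaFiberEquiv φ)]
    rw [h0, Finset.sum_congr rfl fun U _ => hfib U, Finset.sum_const, Finset.card_univ,
      smul_eq_mul, Nat.cast_mul, Nat.cast_pow, Nat.card_eq_fintype_card]
  rw [htot, card_grass d]
  have : finrank F (X ⧸ A) = finrank F X - finrank F A := by
    have := Submodule.finrank_quotient_add_finrank A
    omega
  rw [this]
  ring



lemma card_inter_eq (E W : Submodule F X) (hWE : W ≤ E) (δ : ℕ)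
    (hWδ : finrank F W ≤ δ) :
    (Nat.card {V : Submodule F X // finrank F V = δ ∧ E ⊓ V = W} : ℚ)
      = (Fintype.card F : ℚ) ^ ((finrank F E - finrank F W) * (δ - finrank F W))
        * gaussBinom (Fintype.card F) ((finrank F X - finrank F E : ℕ)) ((δ - finrank F W : ℕ)) := by
  classical
  haveI : Finite (X ⧸ W) := Finite.of_surjective _ (Submodule.mkQ_surjective W)
  haveI : Fintype (X ⧸ W) := Fintype.ofFinite _
  set i := finrank F W with hidef
  set A : Submodule F (X ⧸ W) := map W.mkQ E with hA
  have hmapbot : map W.mkQ W = ⊥ := by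
    rw [eq_bot_iff]
    rintro x ⟨a, ha, rfl⟩
    simpa using (Submodule.Quotient.mk_eq_zero W).2 ha
  have hafr : finrank F A = finrank F E - i := by
    have h := finrank_map_mkQ_add W E
    rw [inf_eq_left.2 hWE, ← hA] at h
    omega
  have e : {V : Submodule F X // finrank F V = δ ∧ E ⊓ V = W}
      ≃ {V' : Submodule F (X ⧸ W) // finrank F V' = δ - i ∧ A ⊓ V' = ⊥} :=
    { toFun := fun V => by
        have hWV : W ≤ V.1 := by
          have h' : E ⊓ V.1 ≤ V.1 := inf_le_right
          rwa [V.2.2] at h'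
        refine ⟨map W.mkQ V.1, ?_, ?_⟩
        · have h := finrank_map_mkQ_add W V.1
          rw [inf_eq_left.2 hWV, V.2.1] at h
          omega
        · rw [eq_bot_iff]
          rintro x ⟨hx1, hx2⟩
          obtain ⟨e', he', rfl⟩ := hx1
          obtain ⟨v, hv, hev⟩ := hx2
          have hsub : e' - v ∈ W := (Submodule.Quotient.eq W).1 hev.symm
          have he'V : e' ∈ V.1 := by
            have : e' - v ∈ V.1 := hWV hsub
            simpa using V.1.add_mem this hv
          have : e' ∈ W := V.2.2 ▸ ⟨he', he'V⟩
          simpa using (Submodule.Quotient.mk_eq_zero W).2 this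
      invFun := fun V' => by
        refine ⟨comap W.mkQ V'.1, ?_, ?_⟩
        · have hker : W ≤ comap W.mkQ V'.1 := by
            intro x hx
            show W.mkQ x ∈ V'.1
            have h0 : W.mkQ x = 0 := (Submodule.Quotient.mk_eq_zero W).2 hx
            rw [h0]
            exact zero_mem _
          have hmap : map W.mkQ (comap W.mkQ V'.1) = V'.1 := by
            rw [Submodule.map_comap_eq, Submodule.range_mkQ, top_inf_eq]
          have h := finrank_map_mkQ_add W (comap W.mkQ V'.1)
          rw [hmap, inf_eq_left.2 hker, V'.2.1] at h
          omega
        · apply le_antisymm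
          · intro x hx
            obtain ⟨hxE, hxV⟩ := hx
            have hq : W.mkQ x ∈ A ⊓ V'.1 := ⟨⟨x, hxE, rfl⟩, hxV⟩
            rw [V'.2.2] at hq
            exact (Submodule.Quotient.mk_eq_zero W).1 hq
          · refine le_inf hWE (fun x hx => ?_)
            show W.mkQ x ∈ V'.1
            have h0 : W.mkQ x = 0 := (Submodule.Quotient.mk_eq_zero W).2 hx
            rw [h0]
            exact zero_mem _
      left_inv := fun V => by
        apply Subtype.ext
        show comap W.mkQ (map W.mkQ V.1) = V.1
        have hWV : W ≤ V.1 := by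
          have h' : E ⊓ V.1 ≤ V.1 := inf_le_right
          rwa [V.2.2] at h'
        rw [Submodule.comap_map_eq, Submodule.ker_mkQ, sup_eq_left.2 hWV]
      right_inv := fun V' => by
        apply Subtype.ext
        show map W.mkQ (comap W.mkQ V'.1) = V'.1
        rw [Submodule.map_comap_eq, Submodule.range_mkQ, top_inf_eq] }
  rw [Nat.card_congr e, card_disjoint A (δ - i), hafr]
  have hfrq : finrank F (X ⧸ W) = finrank F X - i := by
    have := Submodule.finrank_quotient_add_finrank W
    omega
  rw [hfrq]
  have hiE : i ≤ finrank F E := Submodule.finrank_mono hWE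
  have hEX : finrank F E ≤ finrank F X := Submodule.finrank_le E
  congr 2
  omega



lemma card_inter_dim (E : Submodule F X) (i δ : ℕ) (hiδ : i ≤ δ) :
    (Nat.card {V : Submodule F X //
        finrank F V = δ ∧ finrank F (E ⊓ V : Submodule F X) = i} : ℚ)
      = gaussBinom (Fintype.card F) (finrank F E) i
        * (Fintype.card F : ℚ) ^ ((finrank F E - i) * (δ - i))
        * gaussBinom (Fintype.card F) ((finrank F X - finrank F E : ℕ)) ((δ - i : ℕ)) := by
  classical
  haveI : Fintype {W : Submodule F X // W ≤ E ∧ finrank F W = i} := Fintype.ofFinite _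
  let φ : {V : Submodule F X // finrank F V = δ ∧ finrank F (E ⊓ V : Submodule F X) = i}
      → {W : Submodule F X // W ≤ E ∧ finrank F W = i} :=
    fun V => ⟨E ⊓ V.1, inf_le_left, V.2.2⟩
  have hfib : ∀ W : {W : Submodule F X // W ≤ E ∧ finrank F W = i},
      (Nat.card {V // φ V = W} : ℚ)
        = (Fintype.card F : ℚ) ^ ((finrank F E - i) * (δ - i))
          * gaussBinom (Fintype.card F) ((finrank F X - finrank F E : ℕ)) ((δ - i : ℕ)) := by
    intro W
    have e : {V // φ V = W} ≃ {V : Submodule F X // finrank F V = δ ∧ E ⊓ V = W.1} :=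
      { toFun := fun V => ⟨V.1.1, V.1.2.1, congrArg Subtype.val V.2⟩
        invFun := fun V => ⟨⟨V.1, V.2.1, by rw [V.2.2]; exact W.2.2⟩, Subtype.ext V.2.2⟩
        left_inv := fun V => by apply Subtype.ext; apply Subtype.ext; rfl
        right_inv := fun V => by apply Subtype.ext; rfl }
    rw [Nat.card_congr e, card_inter_eq E W.1 W.2.1 δ (by rw [W.2.2]; exact hiδ), W.2.2]
  have hW : (Nat.card {W : Submodule F X // W ≤ E ∧ finrank F W = i} : ℚ)
      = gaussBinom (Fintype.card F) (finrank F E) i := by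
    have e2 : {W' : Submodule F E // finrank F W' = i}
        ≃ {W : Submodule F X // W ≤ E ∧ finrank F W = i} :=
      { toFun := fun W' => ⟨map E.subtype W'.1, Submodule.map_subtype_le E W'.1, by
          rw [Submodule.finrank_map_subtype_eq, W'.2]⟩
        invFun := fun W => ⟨comap E.subtype W.1, by
          rw [(Submodule.comapSubtypeEquivOfLe W.2.1).finrank_eq, W.2.2]⟩
        left_inv := fun W' => by
          apply Subtype.ext
          exact Submodule.comap_map_eq_of_injective (Submodule.injective_subtype E) W'.1
        right_inv := fun W => by
          apply Subtype.ext
          show map E.subtype (comap E.subtype W.1) = W.1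
          rw [Submodule.map_comap_subtype, inf_eq_right.2 W.2.1] }
    rw [← Nat.card_congr e2, card_grass i]
  calc (Nat.card {V : Submodule F X //
        finrank F V = δ ∧ finrank F (E ⊓ V : Submodule F X) = i} : ℚ)
      = ∑ W : {W : Submodule F X // W ≤ E ∧ finrank F W = i}, (Nat.card {V // φ V = W} : ℚ) := by
        rw [← Nat.cast_sum]
        congr 1
        rw [← natCard_sigma, Nat.card_congr (Equiv.sigmaFiberEquiv φ)]
    _ = ∑ _W : {W : Submodule F X // W ≤ E ∧ finrank F W = i},
          ((Fintype.card F : ℚ) ^ ((finrank F E - i) * (δ - i))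
            * gaussBinom (Fintype.card F) ((finrank F X - finrank F E : ℕ)) ((δ - i : ℕ))) :=
        Finset.sum_congr rfl fun W _ => hfib W
    _ = _ := by
        rw [Finset.sum_const, Finset.card_univ, ← Nat.card_eq_fintype_card, nsmul_eq_mul, hW]
        ring

lemma card_inter_ge (E : Submodule F X) (t δ : ℕ) :
    (Nat.card {V : Submodule F X //
        finrank F V = δ ∧ t ≤ finrank F (E ⊓ V : Submodule F X)} : ℚ)
      = ∑ i ∈ Finset.Icc t (min δ (finrank F E)),
          gaussBinom (Fintype.card F) (finrank F E) i
            * (Fintype.card F : ℚ) ^ ((finrank F E - i) * (δ - i))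
            * gaussBinom (Fintype.card F) ((finrank F X - finrank F E : ℕ)) ((δ - i : ℕ)) := by
  classical
  let s := Finset.Icc t (min δ (finrank F E))
  let φ : {V : Submodule F X // finrank F V = δ ∧ t ≤ finrank F (E ⊓ V : Submodule F X)} → ↥s :=
    fun V => ⟨finrank F (E ⊓ V.1 : Submodule F X), by
      rw [Finset.mem_Icc]
      refine ⟨V.2.2, le_min ?_ ?_⟩
      · exact le_of_le_of_eq (Submodule.finrank_mono inf_le_right) V.2.1
      · exact Submodule.finrank_mono inf_le_left⟩
  have hfib : ∀ x : ↥s,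
      (Nat.card {V // φ V = x} : ℚ)
        = gaussBinom (Fintype.card F) (finrank F E) x.1
            * (Fintype.card F : ℚ) ^ ((finrank F E - x.1) * (δ - x.1))
            * gaussBinom (Fintype.card F) ((finrank F X - finrank F E : ℕ)) ((δ - x.1 : ℕ)) := by
    intro x
    have hx := Finset.mem_Icc.1 x.2
    have e : {V // φ V = x} ≃ {V : Submodule F X //
        finrank F V = δ ∧ finrank F (E ⊓ V : Submodule F X) = x.1} :=
      { toFun := fun V => ⟨V.1.1, V.1.2.1, congrArg Subtype.val V.2⟩
        invFun := fun V => ⟨⟨V.1, V.2.1, by rw [V.2.2]; exact hx.1⟩, Subtype.ext V.2.2⟩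
        left_inv := fun V => by apply Subtype.ext; apply Subtype.ext; rfl
        right_inv := fun V => by apply Subtype.ext; rfl }
    rw [Nat.card_congr e, card_inter_dim E x.1 δ (le_trans (hx.2.trans (min_le_left _ _)) le_rfl)]
  calc (Nat.card {V : Submodule F X //
        finrank F V = δ ∧ t ≤ finrank F (E ⊓ V : Submodule F X)} : ℚ)
      = ∑ x : ↥s, (Nat.card {V // φ V = x} : ℚ) := by
        rw [← Nat.cast_sum]
        congr 1
        rw [← natCard_sigma, Nat.card_congr (Equiv.sigmaFiberEquiv φ)]
    _ = ∑ x : ↥s, (gaussBinom (Fintype.card F) (finrank F E) x.1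
            * (Fintype.card F : ℚ) ^ ((finrank F E - x.1) * (δ - x.1))
            * gaussBinom (Fintype.card F) ((finrank F X - finrank F E : ℕ)) ((δ - x.1 : ℕ))) :=
        Finset.sum_congr rfl fun x _ => hfib x
    _ = _ := Finset.sum_coe_sort s (fun i => gaussBinom (Fintype.card F) (finrank F E) i
            * (Fintype.card F : ℚ) ^ ((finrank F E - i) * (δ - i))
            * gaussBinom (Fintype.card F) ((finrank F X - finrank F E : ℕ)) ((δ - i : ℕ)))

end CountingLemmas


/-- For a fixed `j`-dimensional subspace `E` of `F_q^n` and a uniformly random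
`δ`-dimensional subspace `V` (with `2j + δ > n − k`), the probability that
`dim(E ∩ V) ≥ ⌈j − (n−k)/2 + δ/2⌉` equals
`(Σ_{i=⌈j−(n−k)/2+δ/2⌉}^{min{δ,j}} [n−j, δ−i]_q [j, i]_q q^{(j−i)(δ−i)}) / [n, δ]_q`
and is at most `16 n q^{−⌈δ/2 + j − (n−k)/2⌉((n+k)/2 − ⌈δ/2⌉)}`. -/
theorem stmt6 (q n k δ j : ℕ) (hq : 2 ≤ q) (F : Type) [Field F] [Fintype F]
    (hcard : Fintype.card F = q)
    (hk : k ≤ n) (hj : j ≤ n) (hδ : δ ≤ n) (hbig : (n : ℤ) - k < 2 * j + δ)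
    (E : Submodule F (Fin n → F)) (hE : Module.finrank F E = j) :
    ((Nat.card {V : Submodule F (Fin n → F) //
        Module.finrank F V = δ ∧
          ⌈(j : ℚ) - ((n : ℚ) - k) / 2 + (δ : ℚ) / 2⌉ ≤ (Module.finrank F ↥(E ⊓ V) : ℤ)} : ℚ)
        / gaussBinom q n δ
      = (∑ i ∈ Finset.Icc (⌈(j : ℚ) - ((n : ℚ) - k) / 2 + (δ : ℚ) / 2⌉) ((min δ j : ℕ) : ℤ),
          gaussBinom q ((n : ℤ) - j) ((δ : ℤ) - i) * gaussBinom q j i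
            * (q : ℚ) ^ (((j : ℤ) - i) * ((δ : ℤ) - i))) / gaussBinom q n δ)
    ∧ ((Nat.card {V : Submodule F (Fin n → F) //
        Module.finrank F V = δ ∧
          ⌈(j : ℚ) - ((n : ℚ) - k) / 2 + (δ : ℚ) / 2⌉ ≤ (Module.finrank F ↥(E ⊓ V) : ℤ)} : ℝ)
        / ((gaussBinom q n δ : ℚ) : ℝ)
      ≤ 16 * n * (q : ℝ) ^ (-((⌈(δ : ℚ) / 2 + j - ((n : ℚ) - k) / 2⌉ : ℝ)
          * (((n : ℝ) + k) / 2 - (⌈(δ : ℚ) / 2⌉ : ℝ))))) := by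
  have hq' : Fintype.card F = q := hcard
  have hnfr : finrank F (Fin n → F) = n := Module.finrank_fin_fun F
  set t : ℤ := ⌈(j : ℚ) - ((n : ℚ) - k) / 2 + (δ : ℚ) / 2⌉ with ht
  have hbigQ : ((n : ℚ) - k) < 2 * j + δ := by exact_mod_cast hbig
  have htpos : 0 < t := Int.ceil_pos.2 (by push_cast; linarith)
  have hcount : Nat.card {V : Submodule F (Fin n → F) //
        finrank F V = δ ∧ t ≤ (finrank F (E ⊓ V : Submodule F (Fin n → F)) : ℤ)}
      = Nat.card {V : Submodule F (Fin n → F) //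
        finrank F V = δ ∧ t.toNat ≤ finrank F (E ⊓ V : Submodule F (Fin n → F))} := by
    apply Nat.card_congr
    apply Equiv.subtypeEquivRight
    intro V
    exact and_congr_right fun _ => Int.toNat_le.symm
  have hmain := card_inter_ge (F := F) (X := Fin n → F) E t.toNat δ
  rw [hE, hnfr, hq'] at hmain
  have hminj : min δ j ≤ j := min_le_right _ _
  have hminδ : min δ j ≤ δ := min_le_left _ _
  have hsum : (∑ i ∈ Finset.Icc t ((min δ j : ℕ) : ℤ),
        gaussBinom q ((n : ℤ) - j) ((δ : ℤ) - i) * gaussBinom q j i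
          * (q : ℚ) ^ (((j : ℤ) - i) * ((δ : ℤ) - i)))
      = ∑ i ∈ Finset.Icc t.toNat (min δ j),
          gaussBinom q j i * (q:ℚ)^((j-i)*(δ-i))
            * gaussBinom q ((n-j : ℕ) : ℤ) ((δ-i : ℕ) : ℤ) := by
    refine Finset.sum_nbij' (fun a => a.toNat) (fun b => (b : ℤ)) ?_ ?_ ?_ ?_ ?_
    · intro a ha; rw [Finset.mem_Icc] at *; omega
    · intro b hb; rw [Finset.mem_Icc] at *; omega
    · intro a ha; rw [Finset.mem_Icc] at ha; omega
    · intro b hb; rw [Finset.mem_Icc] at hb; omega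
    · intro a ha
      rw [Finset.mem_Icc] at ha
      obtain ⟨ha1, ha2⟩ := ha
      have haj : a ≤ (j : ℤ) := le_trans ha2 (by exact_mod_cast hminj)
      have haδ : a ≤ (δ : ℤ) := le_trans ha2 (by exact_mod_cast hminδ)
      have e1 : (j:ℤ) - a = ((j - a.toNat : ℕ) : ℤ) := by omega
      have e2 : (δ:ℤ) - a = ((δ - a.toNat : ℕ) : ℤ) := by omega
      have e3 : (n:ℤ) - j = ((n - j : ℕ) : ℤ) := by omega
      have e4 : (a : ℤ) = ((a.toNat : ℕ) : ℤ) := by omega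
      rw [e1, e2, e3, e4, ← Nat.cast_mul, zpow_natCast, Int.toNat_natCast]
      ring
  constructor
  · rw [hcount, hmain, hsum]
  · have hqQ : (2:ℚ) ≤ (q:ℚ) := by exact_mod_cast hq
    have hqR : (1:ℝ) < (q:ℝ) := by exact_mod_cast Nat.lt_of_lt_of_le one_lt_two hq
    have hGpos : 0 < gaussBinom q n δ := gaussBinom_pos q hq n δ hδ
    have hGR : (0:ℝ) < ((gaussBinom q n δ : ℚ) : ℝ) := by exact_mod_cast hGpos
    have hn1 : 1 ≤ n := by omega
    have hceil : ⌈(δ : ℚ) / 2 + (j:ℚ) - ((n : ℚ) - k) / 2⌉ = t := by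
      rw [ht]
      congr 1
      ring
    rw [hceil]
    set M : ℝ := ((n : ℝ) + k) / 2 - (⌈(δ : ℚ) / 2⌉ : ℝ) with hMdef
    have htR : (1:ℝ) ≤ ((t:ℤ):ℝ) := by exact_mod_cast htpos
    rcases le_or_gt M 0 with hM0 | hM0
    · -- trivial case: RHS ≥ 16 ≥ 1 ≥ LHS
      have hrpow1 : (1:ℝ) ≤ (q:ℝ) ^ (-(((t:ℤ):ℝ) * M)) := by
        rw [← Real.rpow_zero (q:ℝ)]
        apply Real.rpow_le_rpow_of_exponent_le hqR.le
        nlinarith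
      have hle1 : ((Nat.card {V : Submodule F (Fin n → F) //
          finrank F V = δ ∧ t ≤ (finrank F (E ⊓ V : Submodule F (Fin n → F)) : ℤ)} : ℕ) : ℝ)
          / ((gaussBinom q n δ : ℚ) : ℝ) ≤ 1 := by
        rw [div_le_one hGR]
        have hmono : Nat.card {V : Submodule F (Fin n → F) //
            finrank F V = δ ∧ t ≤ (finrank F (E ⊓ V : Submodule F (Fin n → F)) : ℤ)}
            ≤ Nat.card {V : Submodule F (Fin n → F) // finrank F V = δ} :=
          Nat.card_le_card_of_injective (fun V => ⟨V.1, V.2.1⟩)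
            (by
              intro V W h
              have h2 : V.1 = W.1 := congrArg
                (fun z : {V : Submodule F (Fin n → F) // finrank F V = δ} => z.val) h
              exact Subtype.ext h2)
        have hgr := card_grass (F := F) (X := Fin n → F) δ
        rw [hnfr, hq'] at hgr
        calc ((Nat.card {V : Submodule F (Fin n → F) //
            finrank F V = δ ∧ t ≤ (finrank F (E ⊓ V : Submodule F (Fin n → F)) : ℤ)} : ℕ) : ℝ)
            ≤ ((Nat.card {V : Submodule F (Fin n → F) // finrank F V = δ} : ℕ) : ℝ) := by
              exact_mod_cast hmono
          _ = ((gaussBinom q n δ : ℚ) : ℝ) := by exact_mod_cast congrArg (Rat.cast (K := ℝ)) hgr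
      have h16 : (16:ℝ) * n * (q:ℝ) ^ (-(((t:ℤ):ℝ) * M)) ≥ 1 := by
        have hn1R : (1:ℝ) ≤ n := by exact_mod_cast hn1
        nlinarith
      linarith
    · -- main case
      have hcastsum : ((Nat.card {V : Submodule F (Fin n → F) //
          finrank F V = δ ∧ t ≤ (finrank F (E ⊓ V : Submodule F (Fin n → F)) : ℤ)} : ℕ) : ℝ)
          = ∑ i ∈ Finset.Icc t.toNat (min δ j),
              ((gaussBinom q j i * (q:ℚ)^((j-i)*(δ-i))
                * gaussBinom q ((n-j : ℕ) : ℤ) ((δ-i : ℕ) : ℤ) : ℚ) : ℝ) := by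
        rw [hcount]
        rw [show ((Nat.card {V : Submodule F (Fin n → F) //
          finrank F V = δ ∧ t.toNat ≤ finrank F (E ⊓ V : Submodule F (Fin n → F))} : ℕ) : ℝ)
          = (((Nat.card {V : Submodule F (Fin n → F) //
          finrank F V = δ ∧ t.toNat ≤ finrank F (E ⊓ V : Submodule F (Fin n → F))} : ℕ) : ℚ) : ℝ)
          by push_cast; ring]
        rw [hmain]
        push_cast
        ring
      have hbound : ∀ i ∈ Finset.Icc t.toNat (min δ j),
          ((gaussBinom q j i * (q:ℚ)^((j-i)*(δ-i))
            * gaussBinom q ((n-j : ℕ) : ℤ) ((δ-i : ℕ) : ℤ) : ℚ) : ℝ)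
            / ((gaussBinom q n δ : ℚ) : ℝ)
          ≤ 16 * (q:ℝ) ^ (-(((t:ℤ):ℝ) * M)) := by
        intro i hi
        rw [Finset.mem_Icc] at hi
        have hij : i ≤ j := le_trans hi.2 hminj
        have hiδ : i ≤ δ := le_trans hi.2 hminδ
        have hti : t ≤ (i : ℤ) := by omega
        have hrpos : (0:ℝ) < (q:ℝ) ^ (-(((t:ℤ):ℝ) * M)) :=
          Real.rpow_pos_of_pos (by linarith) _
        by_cases hz : (n - j : ℕ) < (δ - i : ℕ)
        · have h0 : gaussBinom q ((n-j : ℕ) : ℤ) ((δ-i : ℕ) : ℤ) = 0 :=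
            gaussBinom_of_gt _ (by exact_mod_cast hz)
          rw [h0]
          simp only [mul_zero, Rat.cast_zero, zero_div]
          positivity
        · push_neg at hz
          have hb1 : gaussBinom q j i ≤ 4 * (q:ℚ)^(i*(j-i)) := gaussBinom_le q hq j i hij
          have hb2 : gaussBinom q ((n-j : ℕ) : ℤ) ((δ-i : ℕ) : ℤ)
              ≤ 4 * (q:ℚ)^((δ-i)*((n-j)-(δ-i))) := gaussBinom_le q hq (n-j) (δ-i) hz
          have hg1 : 0 ≤ gaussBinom q j i := gaussBinom_nonneg q hq _ _
          have hg2 : 0 ≤ gaussBinom q ((n-j : ℕ) : ℤ) ((δ-i : ℕ) : ℤ) := gaussBinom_nonneg q hq _ _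
          have hqQ0 : (0:ℚ) < (q:ℚ) := by linarith
          have hterm : gaussBinom q j i * (q:ℚ)^((j-i)*(δ-i))
              * gaussBinom q ((n-j : ℕ) : ℤ) ((δ-i : ℕ) : ℤ)
              ≤ 16 * (q:ℚ)^(i*(j-i) + (j-i)*(δ-i) + (δ-i)*((n-j)-(δ-i))) := by
            calc gaussBinom q j i * (q:ℚ)^((j-i)*(δ-i))
                * gaussBinom q ((n-j : ℕ) : ℤ) ((δ-i : ℕ) : ℤ)
                ≤ (4 * (q:ℚ)^(i*(j-i))) * (q:ℚ)^((j-i)*(δ-i))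
                  * (4 * (q:ℚ)^((δ-i)*((n-j)-(δ-i)))) := by
                  apply _root_.mul_le_mul _ hb2 hg2 (by positivity)
                  apply mul_le_mul_of_nonneg_right hb1 (by positivity)
              _ = 16 * (q:ℚ)^(i*(j-i) + (j-i)*(δ-i) + (δ-i)*((n-j)-(δ-i))) := by
                  rw [pow_add, pow_add]
                  ring
          have hGlow : (q:ℚ)^(δ*(n-δ)) ≤ gaussBinom q n δ := gaussBinom_ge q hq n δ hδ
          have hdiv : gaussBinom q j i * (q:ℚ)^((j-i)*(δ-i))
              * gaussBinom q ((n-j : ℕ) : ℤ) ((δ-i : ℕ) : ℤ) / gaussBinom q n δ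
              ≤ 16 * (q:ℚ)^(i*(j-i) + (j-i)*(δ-i) + (δ-i)*((n-j)-(δ-i))) / (q:ℚ)^(δ*(n-δ)) :=
            div_le_div₀ (by positivity) hterm (by positivity) hGlow
          have hzpow : (16 : ℚ) * (q:ℚ)^(i*(j-i) + (j-i)*(δ-i) + (δ-i)*((n-j)-(δ-i)))
              / (q:ℚ)^(δ*(n-δ))
              = 16 * (q:ℚ)^(((i*(j-i) + (j-i)*(δ-i) + (δ-i)*((n-j)-(δ-i)) : ℕ) : ℤ)
                  - ((δ*(n-δ) : ℕ) : ℤ)) := by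
            rw [mul_div_assoc, ← zpow_natCast (q:ℚ) (i*(j-i) + (j-i)*(δ-i) + (δ-i)*((n-j)-(δ-i))),
              ← zpow_natCast (q:ℚ) (δ*(n-δ)), ← zpow_sub₀ (by positivity)]
          have hE : ((i*(j-i) + (j-i)*(δ-i) + (δ-i)*((n-j)-(δ-i)) : ℕ) : ℤ)
              - ((δ*(n-δ) : ℕ) : ℤ) = -((i:ℤ) * ((n:ℤ) - j - δ + i)) := by
            push_cast [Nat.cast_sub hij, Nat.cast_sub hiδ, Nat.cast_sub hz,
              Nat.cast_sub hj, Nat.cast_sub hδ]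
            ring
          set EE : ℤ := ((i*(j-i) + (j-i)*(δ-i) + (δ-i)*((n-j)-(δ-i)) : ℕ) : ℤ)
              - ((δ*(n-δ) : ℕ) : ℤ) with hEE
          -- to ℝ
          have hcast2 : ((16 * (q:ℚ)^EE : ℚ) : ℝ) = 16 * (q:ℝ) ^ ((EE:ℤ):ℝ) := by
            rw [Real.rpow_intCast]
            push_cast
            ring
          have hexple : ((EE:ℤ):ℝ) ≤ -(((t:ℤ):ℝ) * M) := by
            rw [hE]
            have hle1 : ((j:ℚ) - ((n:ℚ) - k)/2 + (δ:ℚ)/2) ≤ ((t:ℤ):ℚ) := Int.le_ceil _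
            have hle1R : ((j:ℝ) - ((n:ℝ) - k)/2 + (δ:ℝ)/2) ≤ ((t:ℤ):ℝ) := by
              have h' := (Rat.cast_le (K := ℝ)).2 hle1
              push_cast at h'
              convert h' using 2 <;> push_cast <;> ring
            have hle2 : (δ:ℚ)/2 ≤ ((⌈(δ:ℚ)/2⌉ : ℤ) : ℚ) := Int.le_ceil _
            have hle2R : (δ:ℝ)/2 ≤ ((⌈(δ:ℚ)/2⌉ : ℤ) : ℝ) := by
              have h' := (Rat.cast_le (K := ℝ)).2 hle2
              push_cast at h'
              convert h' using 2 <;> push_cast <;> ring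
            have htiR : ((t:ℤ):ℝ) ≤ (i:ℕ) := by exact_mod_cast hti
            have hMle : M ≤ (n:ℝ) - j - δ + i := by
              rw [hMdef]
              linarith
            have hprod : ((t:ℤ):ℝ) * M ≤ (i:ℝ) * ((n:ℝ) - j - δ + i) :=
              mul_le_mul htiR hMle hM0.le (by positivity)
            push_cast
            push_cast at hprod
            linarith
          have hrle : (q:ℝ) ^ ((EE:ℤ):ℝ) ≤ (q:ℝ) ^ (-(((t:ℤ):ℝ) * M)) :=
            Real.rpow_le_rpow_of_exponent_le hqR.le hexple
          calc ((gaussBinom q j i * (q:ℚ)^((j-i)*(δ-i))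
              * gaussBinom q ((n-j : ℕ) : ℤ) ((δ-i : ℕ) : ℤ) : ℚ) : ℝ)
              / ((gaussBinom q n δ : ℚ) : ℝ)
              = (((gaussBinom q j i * (q:ℚ)^((j-i)*(δ-i))
                * gaussBinom q ((n-j : ℕ) : ℤ) ((δ-i : ℕ) : ℤ)) / gaussBinom q n δ : ℚ) : ℝ) := by
                push_cast
                ring
            _ ≤ ((16 * (q:ℚ)^EE : ℚ) : ℝ) := by
                apply Rat.cast_le.2
                rw [hEE, ← hzpow]
                exact hdiv
            _ = 16 * (q:ℝ) ^ ((EE:ℤ):ℝ) := hcast2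
            _ ≤ 16 * (q:ℝ) ^ (-(((t:ℤ):ℝ) * M)) := by linarith
      have hcard : ((Finset.Icc t.toNat (min δ j)).card : ℝ) ≤ n := by
        rw [Nat.card_Icc]
        have : min δ j + 1 - t.toNat ≤ n := by omega
        exact_mod_cast this
      have hrpos : (0:ℝ) < (q:ℝ) ^ (-(((t:ℤ):ℝ) * M)) :=
        Real.rpow_pos_of_pos (by linarith) _
      calc ((Nat.card {V : Submodule F (Fin n → F) //
          finrank F V = δ ∧ t ≤ (finrank F (E ⊓ V : Submodule F (Fin n → F)) : ℤ)} : ℕ) : ℝ)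
          / ((gaussBinom q n δ : ℚ) : ℝ)
          = ∑ i ∈ Finset.Icc t.toNat (min δ j),
              ((gaussBinom q j i * (q:ℚ)^((j-i)*(δ-i))
                * gaussBinom q ((n-j : ℕ) : ℤ) ((δ-i : ℕ) : ℤ) : ℚ) : ℝ)
              / ((gaussBinom q n δ : ℚ) : ℝ) := by
            rw [hcastsum, Finset.sum_div]
        _ ≤ ∑ _i ∈ Finset.Icc t.toNat (min δ j), (16 * (q:ℝ) ^ (-(((t:ℤ):ℝ) * M))) :=
            Finset.sum_le_sum hbound
        _ = ((Finset.Icc t.toNat (min δ j)).card : ℝ) * (16 * (q:ℝ) ^ (-(((t:ℤ):ℝ) * M))) := by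
            rw [Finset.sum_const, nsmul_eq_mul]
        _ ≤ (n:ℝ) * (16 * (q:ℝ) ^ (-(((t:ℤ):ℝ) * M))) := by
            apply mul_le_mul_of_nonneg_right hcard (by positivity)
        _ = 16 * n * (q:ℝ) ^ (-(((t:ℤ):ℝ) * M)) := by ring
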